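/- Let G be a finite group, H ≤ G a subgroup, and χ the character of an irreducible finite-dimensional complex representation of G such that (1/|H|) Σ_{h ∈ H} χ(h) = 1. Define φ(g) := (1/|H|) Σ_{h ∈ H} χ(h * g). Then φ satisfies the zonal spherical function equation: for all g₁, g₂ ∈ G, (1/|H|) Σ_{h ∈ H} φ(g₁ * h * g₂) = φ(g₁) * φ(g₂). -/
import Mathlib

open LinearMap Module

/-- In a 1-dimensional space, trace is multiplicative on endomorphisms. -/
lemma trace_mul_of_finrank_one {W : Type*} [AddCommGroup W] [Module ℂ W]
    [FiniteDimensional ℂ W] (h1 : finrank ℂ W = 1) (f g : Module.End ℂ W) :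
    trace ℂ W (f * g) = trace ℂ W f * trace ℂ W g := by
  let b : Basis (Fin 1) ℂ W := finBasisOfFinrankEq ℂ W h1
  rw [trace_eq_matrix_trace ℂ b, trace_eq_matrix_trace ℂ b, trace_eq_matrix_trace ℂ b,
    show (f * g) = f ∘ₗ g from rfl, LinearMap.toMatrix_comp b b b]
  simp [Matrix.trace, Matrix.mul_apply, Fin.sum_univ_one]

lemma key_trace {V : Type*} [AddCommGroup V] [Module ℂ V] [FiniteDimensional ℂ V]
    (P : Module.End ℂ V) (hP : P * P = P) (htr : trace ℂ V P = 1) (A B : Module.End ℂ V) :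
    trace ℂ V (P * A * P * B) = trace ℂ V (P * A) * trace ℂ V (P * B) := by
  set W := LinearMap.range P with hW
  let ι : W →ₗ[ℂ] V := W.subtype
  let π : V →ₗ[ℂ] W := P.rangeRestrict
  have hιπ : ι ∘ₗ π = P := by ext x; rfl
  have hιπ' : ∀ x : V, ι (π x) = P x := fun x => rfl
  have hπι : π ∘ₗ ι = LinearMap.id := by
    ext x
    obtain ⟨y, hy⟩ := x.2
    have : P (x : V) = (x : V) := by
      rw [← hy, ← Module.End.mul_apply, hP]
    simpa [π, ι] using this
  have hπι' : ∀ w : W, π (ι w) = w := fun w => by simpa using LinearMap.congr_fun hπι w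
  have hrank : finrank ℂ W = 1 := by
    have h2 : trace ℂ W (π ∘ₗ ι) = 1 := by
      rw [trace_comp_comm', hιπ, htr]
    rw [hπι, trace_id] at h2
    exact_mod_cast h2
  have htrW : ∀ C : Module.End ℂ V, trace ℂ V (P * C) = trace ℂ W ((π ∘ₗ C) ∘ₗ ι) := by
    intro C
    have : P * C = ι ∘ₗ (π ∘ₗ C) := by
      ext x; exact hιπ' (C x)
    rw [this, trace_comp_comm', LinearMap.comp_assoc]
  have hmain : P * A * P * B = ι ∘ₗ (π ∘ₗ (A ∘ₗ (P ∘ₗ B))) := by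
    ext x
    exact hιπ' (A (P (B x)))
  have hsplit : (π ∘ₗ (A ∘ₗ (P ∘ₗ B))) ∘ₗ ι = ((π ∘ₗ A) ∘ₗ ι) * ((π ∘ₗ B) ∘ₗ ι) := by
    ext w
    rfl
  rw [hmain, trace_comp_comm', hsplit, trace_mul_of_finrank_one hrank, htrW A, htrW B]

/-- The `H`-averaged character `φ_χ(g) = (1/|H|) Σ_{h ∈ H} χ(h * g)`. -/
noncomputable def avgChar {G : Type} [Group G] (H : Subgroup G) [Fintype H] (χ : G → ℂ) (g : G) : ℂ :=
  (1 : ℂ) / (Fintype.card H : ℂ) * ∑ h : H, χ ((h : G) * g)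

/-- If `χ` is an irreducible character of a finite group `G` such that the
trivial representation occurs with multiplicity exactly one in the restriction to `H`
(i.e. `(1/|H|) Σ_{h ∈ H} χ(h) = 1`), then the `H`-averaged character `φ` satisfies the zonal
spherical function equation `(1/|H|) Σ_{h ∈ H} φ(g₁ h g₂) = φ(g₁) φ(g₂)`. -/
theorem avgChar_zonal_spherical_equation (G : Type) [Group G] [Fintype G]
    (H : Subgroup G) [Fintype H] (V : FDRep ℂ G) (hV : CategoryTheory.Simple V)
    (hmult : (1 : ℂ) / (Fintype.card H : ℂ) * ∑ h : H, V.character (h : G) = 1) :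
    ∀ g₁ g₂ : G,
      (1 : ℂ) / (Fintype.card H : ℂ) *
          ∑ h : H, avgChar H V.character (g₁ * (h : G) * g₂)
        = avgChar H V.character g₁ * avgChar H V.character g₂ := by
  intro g₁ g₂
  have hcard : (Fintype.card H : ℂ) ≠ 0 := by
    exact_mod_cast Nat.cast_ne_zero.mpr Fintype.card_ne_zero
  set c : ℂ := (1 : ℂ) / (Fintype.card H : ℂ) with hc
  set S : Module.End ℂ V := ∑ h : H, (V.ρ (h : G)) with hS
  set P : Module.End ℂ V := c • S with hPdef
  have hSS : S * S = (Fintype.card H : ℂ) • S := by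
    rw [hS, Finset.sum_mul_sum]
    have h1 : ∀ a : H, ∑ b : H, V.ρ (a : G) * V.ρ (b : G) = S := by
      intro a
      rw [hS]
      refine Fintype.sum_equiv (Equiv.mulLeft a) _ _ fun b => ?_
      simp [← map_mul]
    rw [Finset.sum_congr rfl fun a _ => h1 a, Finset.sum_const, Finset.card_univ]
    exact (Nat.cast_smul_eq_nsmul ℂ _ _).symm
  have hP : P * P = P := by
    rw [hPdef, smul_mul_smul_comm, hSS, smul_smul]
    congr 1
    rw [hc]
    field_simp
  have htrP : LinearMap.trace ℂ V P = 1 := by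
    rw [hPdef, map_smul, hS, map_sum, smul_eq_mul]
    simpa [FDRep.character] using hmult
  have hφ : ∀ g : G, avgChar H V.character g = LinearMap.trace ℂ V (P * V.ρ g) := by
    intro g
    rw [hPdef, smul_mul_assoc, map_smul, hS, Finset.sum_mul, map_sum, smul_eq_mul]
    unfold avgChar
    rw [← hc]
    congr 1
    refine Finset.sum_congr rfl fun h _ => ?_
    rw [FDRep.character, map_mul]
  have hLHS : P * V.ρ g₁ * P * V.ρ g₂ = c • ∑ h : H, P * V.ρ (g₁ * (h : G) * g₂) := by
    have : P * V.ρ g₁ * P * V.ρ g₂ = c • (P * V.ρ g₁ * S * V.ρ g₂) := by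
      conv_lhs => rw [hPdef]
      simp only [smul_mul_assoc, mul_smul_comm, hPdef]
    rw [this]
    congr 1
    rw [hS, Finset.mul_sum, Finset.sum_mul]
    refine Finset.sum_congr rfl fun h _ => ?_
    simp only [map_mul, mul_assoc]
  calc c * ∑ h : H, avgChar H V.character (g₁ * (h : G) * g₂)
      = c * ∑ h : H, LinearMap.trace ℂ V (P * V.ρ (g₁ * (h : G) * g₂)) := by
        congr 1; exact Finset.sum_congr rfl fun h _ => hφ _
    _ = LinearMap.trace ℂ V (P * V.ρ g₁ * P * V.ρ g₂) := by
        rw [hLHS, map_smul, map_sum, smul_eq_mul]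
    _ = LinearMap.trace ℂ V (P * V.ρ g₁) * LinearMap.trace ℂ V (P * V.ρ g₂) :=
        key_trace P hP htrP _ _
    _ = _ := by rw [← hφ, ← hφ]
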